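/- If an LTL specification φ over input signals I and output signals O is realizable by a finite-state transducer with n states (in the full-visibility setting), then φ is (∅, I, ∅, O)-realizable by a transducer-with-guided-environment (TGE) having a single state and environment memory of size n: the one-state TGE always emits the program that simulates the given transducer on the environment's memory. -/

import Mathlib

/-- LTL formulas over atomic propositions of type `α`. -/
inductive LTL (α : Type) : Type where
  | tt : LTL α
  | ff : LTL α
  | atom : α → LTL α
  | not : LTL α → LTL α
  | and : LTL α → LTL α → LTL α
  | or : LTL α → LTL α → LTL α
  | next : LTL α → LTL α
  | untl : LTL α → LTL α → LTL α

namespace LTL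

variable {α β : Type}

/-- Satisfaction of an LTL formula at position `j` of an infinite word. -/
def satAt (w : ℕ → Set α) : ℕ → LTL α → Prop
  | _, .tt => True
  | _, .ff => False
  | j, .atom a => a ∈ w j
  | j, .not φ => ¬ satAt w j φ
  | j, .and φ ψ => satAt w j φ ∧ satAt w j ψ
  | j, .or φ ψ => satAt w j φ ∨ satAt w j ψ
  | j, .next φ => satAt w (j+1) φ
  | j, .untl φ ψ => ∃ k, j ≤ k ∧ satAt w k ψ ∧ ∀ l, j ≤ l → l < k → satAt w l φ

/-- A word satisfies a formula if it satisfies it at position 0. -/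
def sat (w : ℕ → Set α) (φ : LTL α) : Prop := satAt w 0 φ

/-- Eventually. -/
def F (φ : LTL α) : LTL α := untl tt φ
/-- Always. -/
def G (φ : LTL α) : LTL α := not (F (not φ))
/-- Boolean equivalence. -/
def iff_ (φ ψ : LTL α) : LTL α := or (and φ ψ) (and (not φ) (not ψ))
/-- `Xpow k φ` is `X^k φ`. -/
def Xpow : ℕ → LTL α → LTL α
  | 0, φ => φ
  | k+1, φ => next (Xpow k φ)
/-- `Fpow k φ` is `F^{k+1} φ`: "`φ` holds in at least `k+1` positions".
    (`F^1 p = F p`, `F^{j+1} p = F (p ∧ X (F^j p))`.) -/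
def Fpow : ℕ → LTL α → LTL α
  | 0, φ => F φ
  | k+1, φ => F (and φ (next (Fpow k φ)))

/-- Relabeling of atoms. -/
def map (f : α → β) : LTL α → LTL β
  | .tt => .tt
  | .ff => .ff
  | .atom a => .atom (f a)
  | .not φ => .not (map f φ)
  | .and φ ψ => .and (map f φ) (map f ψ)
  | .or φ ψ => .or (map f φ) (map f ψ)
  | .next φ => .next (map f φ)
  | .untl φ ψ => .untl (map f φ) (map f ψ)

/-- A formula is temporal-operator free (propositional). -/
def temporalFree : LTL α → Bool
  | .tt => true
  | .ff => true
  | .atom _ => true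
  | .not φ => temporalFree φ
  | .and φ ψ => temporalFree φ && temporalFree ψ
  | .or φ ψ => temporalFree φ && temporalFree ψ
  | .next _ => false
  | .untl _ _ => false

/-- `props ψ`: the maximal propositional subformulas of `ψ`. -/
def props : LTL α → List (LTL α)
  | .tt => [.tt]
  | .ff => [.ff]
  | .atom a => [.atom a]
  | .not φ => if temporalFree (LTL.not φ) then [.not φ] else props φ
  | .and φ ψ => if temporalFree (LTL.and φ ψ) then [.and φ ψ] else props φ ++ props ψ
  | .or φ ψ => if temporalFree (LTL.or φ ψ) then [.or φ ψ] else props φ ++ props ψ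
  | .next φ => props φ
  | .untl φ ψ => props φ ++ props ψ

/-- All atoms of the formula satisfy predicate `p`. -/
def atomsAll (p : α → Bool) : LTL α → Bool
  | .tt => true
  | .ff => true
  | .atom a => p a
  | .not φ => atomsAll p φ
  | .and φ ψ => atomsAll p φ && atomsAll p ψ
  | .or φ ψ => atomsAll p φ && atomsAll p ψ
  | .next φ => atomsAll p φ
  | .untl φ ψ => atomsAll p φ && atomsAll p ψ

/-- Maximal subformulas all of whose atoms satisfy `p` (used for `cl_H`). -/
def clP (p : α → Bool) : LTL α → List (LTL α)
  | .tt => []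
  | .ff => []
  | .atom a => if p a then [.atom a] else []
  | .not φ => if atomsAll p (LTL.not φ) then [.not φ] else clP p φ
  | .and φ ψ => if atomsAll p (LTL.and φ ψ) then [.and φ ψ] else clP p φ ++ clP p ψ
  | .or φ ψ => if atomsAll p (LTL.or φ ψ) then [.or φ ψ] else clP p φ ++ clP p ψ
  | .next φ => clP p φ
  | .untl φ ψ => clP p φ ++ clP p ψ

/-- `clH p φ`: maximal subformulas of formulas in `props φ` all of whose atoms
    satisfy `p` (i.e. are hidden signals). -/
def clH (p : α → Bool) (φ : LTL α) : List (LTL α) :=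
  (props φ).foldr (fun ψ acc => clP p ψ ++ acc) []

/-- Propositional satisfaction of a formula by a single assignment. -/
def propSat (σ : Set α) (φ : LTL α) : Prop := satAt (fun _ => σ) 0 φ

end LTL

/-- A (full-visibility) finite-state transducer with inputs `ι`, outputs `o`
    and states `S`. -/
structure Transducer (ι o S : Type) where
  init : S
  trans : S → Set ι → S
  out : S → Set ι → Set o

namespace Transducer

variable {ι o S : Type}

/-- The run of a transducer on an input word. -/
def run (T : Transducer ι o S) (wI : ℕ → Set ι) : ℕ → S
  | 0 => T.init
  | j+1 => T.trans (run T wI j) (wI j)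

/-- The computation of a transducer on an input word, as a word over `2^{I ∪ O}`. -/
def comp (T : Transducer ι o S) (wI : ℕ → Set ι) (j : ℕ) : Set (ι ⊕ o) :=
  Sum.inl '' wI j ∪ Sum.inr '' T.out (T.run wI j) (wI j)

/-- `(I,O)`-realizability. -/
def Realizes (T : Transducer ι o S) (φ : LTL (ι ⊕ o)) : Prop :=
  ∀ wI, LTL.sat (T.comp wI) φ

end Transducer

/-- A transducer with a guided environment (TGE): visible inputs `ν`, hidden
    inputs `η`, controlled outputs `γc`, guided outputs `γg`, states `S`,
    environment memory `M`.  Each transition emits an assignment to the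
    controlled outputs together with a program `M × 2^H → M × 2^G`. -/
structure TGE (ν η γc γg S M : Type) where
  init : S
  m0 : M
  trans : S → Set ν → S
  out : S → Set ν → Set γc × (M → Set η → M × Set γg)

namespace TGE

variable {ν η γc γg S M : Type}

/-- The run of a TGE depends only on the visible inputs. -/
def run (T : TGE ν η γc γg S M) (wV : ℕ → Set ν) : ℕ → S
  | 0 => T.init
  | j+1 => T.trans (run T wV j) (wV j)

/-- The environment's memory sequence, obtained by iterating the emitted
    programs on the hidden inputs. -/
def mem (T : TGE ν η γc γg S M) (wV : ℕ → Set ν) (wH : ℕ → Set η) : ℕ → M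
  | 0 => T.m0
  | j+1 => ((T.out (T.run wV j) (wV j)).2 (mem T wV wH j) (wH j)).1

/-- The guided output at step `j`. -/
def guided (T : TGE ν η γc γg S M) (wV : ℕ → Set ν) (wH : ℕ → Set η) (j : ℕ) :
    Set γg :=
  ((T.out (T.run wV j) (wV j)).2 (T.mem wV wH j) (wH j)).2

/-- The computation of a TGE, over `2^{(V ∪ H) ∪ (C ∪ G)}`. -/
def comp (T : TGE ν η γc γg S M) (wV : ℕ → Set ν) (wH : ℕ → Set η) (j : ℕ) :
    Set ((ν ⊕ η) ⊕ (γc ⊕ γg)) :=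
  Sum.inl '' (Sum.inl '' wV j ∪ Sum.inr '' wH j) ∪
    Sum.inr '' (Sum.inl '' (T.out (T.run wV j) (wV j)).1 ∪
                 Sum.inr '' T.guided wV wH j)

/-- `(V,H,C,G)`-realizability of an LTL specification. -/
def Realizes (T : TGE ν η γc γg S M) (φ : LTL ((ν ⊕ η) ⊕ (γc ⊕ γg))) : Prop :=
  ∀ wV wH, LTL.sat (T.comp wV wH) φ

/-- `(V,H,C,G)`-realizability of an arbitrary language. -/
def RealizesL (T : TGE ν η γc γg S M)
    (L : Set (ℕ → Set ((ν ⊕ η) ⊕ (γc ⊕ γg)))) : Prop :=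
  ∀ wV wH, T.comp wV wH ∈ L

end TGE

lemma satAt_map_iff {α β : Type} (f : α → β) (w : ℕ → Set β) (w' : ℕ → Set α)
    (hw : ∀ j a, f a ∈ w j ↔ a ∈ w' j) :
    ∀ (φ : LTL α) (j : ℕ), LTL.satAt w j (φ.map f) ↔ LTL.satAt w' j φ := by
  intro φ
  induction φ with
  | tt => intro j; simp [LTL.map, LTL.satAt]
  | ff => intro j; simp [LTL.map, LTL.satAt]
  | atom a => intro j; simpa [LTL.map, LTL.satAt] using hw j a
  | not φ ih => intro j; simp [LTL.map, LTL.satAt, ih]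
  | and φ ψ ih1 ih2 => intro j; simp [LTL.map, LTL.satAt, ih1, ih2]
  | or φ ψ ih1 ih2 => intro j; simp [LTL.map, LTL.satAt, ih1, ih2]
  | next φ ih => intro j; simp [LTL.map, LTL.satAt, ih]
  | untl φ ψ ih1 ih2 => intro j; simp [LTL.map, LTL.satAt, ih1, ih2]

/-- If `φ` is realizable by a transducer with state space `S`
(`n` states), then `φ` is `(∅, I, ∅, O)`-realizable by the one-state TGE with
environment memory `S` that always emits the program simulating the
transducer on the environment's memory. -/
theorem stmt0 {ι o S : Type} (φ : LTL (ι ⊕ o)) (T : Transducer ι o S)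
    (h : T.Realizes φ) :
    (TGE.mk () T.init (fun _ _ => ())
        (fun _ _ => (∅, fun m i => (T.trans m i, T.out m i))) :
      TGE Empty ι Empty o Unit S).Realizes
      (φ.map (Sum.map Sum.inr Sum.inr)) := by
  intro wV wH
  set T' : TGE Empty ι Empty o Unit S :=
    TGE.mk () T.init (fun _ _ => ())
      (fun _ _ => (∅, fun m i => (T.trans m i, T.out m i))) with hT'
  have hmem : ∀ j, T'.mem wV wH j = T.run wH j := by
    intro j
    induction j with
    | zero => rfl
    | succ j ih => rw [hT'] at ih; simp [TGE.mem, ih, Transducer.run, hT']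
  have key : ∀ j a, Sum.map Sum.inr Sum.inr a ∈ T'.comp wV wH j ↔
      a ∈ T.comp wH j := by
    intro j a
    cases a with
    | inl i =>
      simp [TGE.comp, Transducer.comp, Sum.map]
    | inr b =>
      rw [hT'] at hmem; simp [TGE.comp, Transducer.comp, Sum.map, TGE.guided, hmem, hT']
  exact (satAt_map_iff _ _ _ key φ 0).mpr (h wH)
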